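/- Let g be a Lorentzian inner product of signature (-,+,...,+) on a real vector space V of dimension d+1 ≥ 2. Let T ∈ V with g(T,T) = -1 and N ∈ V with g(N,N) = 1, g(T,N) = 0. Let α > 0 and 0 < δ ≤ α/(1+α²). Set u = T + δN and define the bilinear form B(v,w) := -g(N,u) g(v,w) + g(N,v) g(u,w) + g(u,v) g(N,w). Then for every v ∈ V satisfying the homogeneous boundary condition g(T,v) + α g(N,v) = 0, one has B(v,v) ≤ -δ [ (g(T,v))² + (g(N,v))² + H(v,v) ], where H(v,w) := g(v,w) + g(T,v)g(T,w) - g(N,v)g(N,w). In particular B is negative definite on the subspace {v : g(T,v) + α g(N,v) = 0}. -/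

import Mathlib

set_option maxHeartbeats 1000000 in
theorem stmt3 (d : ℕ) (hd : 1 ≤ d)
    (V : Type*) [AddCommGroup V] [Module ℝ V]
    (g : V →ₗ[ℝ] V →ₗ[ℝ] ℝ) (hg : ∀ v w, g v w = g w v)
    (b : Module.Basis (Fin (d + 1)) ℝ V)
    (hsig : ∀ i j : Fin (d + 1),
      g (b i) (b j) = if i = j then (if i = 0 then (-1 : ℝ) else 1) else 0)
    (T N : V) (hT : g T T = -1) (hN : g N N = 1) (hTN : g T N = 0)
    (α δ : ℝ) (hα : 0 < α) (hδ0 : 0 < δ) (hδ : δ ≤ α / (1 + α ^ 2))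
    (u : V) (hu : u = T + δ • N)
    (B : V → V → ℝ)
    (hB : ∀ v w, B v w = -(g N u) * g v w + g N v * g u w + g u v * g N w)
    (H : V → V → ℝ)
    (hH : ∀ v w, H v w = g v w + g T v * g T w - g N v * g N w) :
    (∀ v : V, g T v + α * g N v = 0 →
      B v v ≤ -δ * ((g T v) ^ 2 + (g N v) ^ 2 + H v v)) ∧
    (∀ v : V, g T v + α * g N v = 0 → v ≠ 0 → B v v < 0) := by
  have hNT : g N T = 0 := by rw [hg]; exact hTN
  -- coordinate formula
  have hrep : ∀ v w : V, g v w =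
      ∑ i : Fin (d+1), (if i = 0 then (-1:ℝ) else 1) * (b.repr v i * b.repr w i) := by
    intro v w
    conv_lhs => rw [← b.sum_repr v, ← b.sum_repr w]
    simp only [map_sum, map_smul, LinearMap.sum_apply, LinearMap.smul_apply, smul_eq_mul, hsig,
      mul_ite, mul_zero, mul_one, mul_neg]
    refine Finset.sum_congr rfl fun i _ => ?_
    rw [Finset.sum_ite_eq' Finset.univ i]
    by_cases h : i = 0 <;> simp [h] <;> ring
  -- positivity of g on the orthogonal complement of T
  have pos : ∀ w : V, g T w = 0 → 0 ≤ g w w ∧ (g w w = 0 → w = 0) := by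
    intro w hw
    have hTT : ∑ i : Fin d, b.repr T i.succ * b.repr T i.succ
        = b.repr T 0 * b.repr T 0 - 1 := by
      have h := hrep T T; rw [hT, Fin.sum_univ_succ] at h
      simp only [Fin.succ_ne_zero, if_false, if_pos rfl, ite_true, one_mul, neg_mul] at h
      linarith
    have hP : ∑ i : Fin d, b.repr T i.succ * b.repr w i.succ
        = b.repr T 0 * b.repr w 0 := by
      have h := hrep T w; rw [hw, Fin.sum_univ_succ] at h
      simp only [Fin.succ_ne_zero, if_false, if_pos rfl, ite_true, one_mul, neg_mul] at h
      linarith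
    have hgww : g w w = -(b.repr w 0 * b.repr w 0)
        + ∑ i : Fin d, b.repr w i.succ * b.repr w i.succ := by
      have h := hrep w w; rw [Fin.sum_univ_succ] at h
      simp only [Fin.succ_ne_zero, if_false, if_pos rfl, ite_true, one_mul, neg_mul] at h
      linarith
    have CS : (∑ i : Fin d, b.repr T i.succ * b.repr w i.succ)^2 ≤
        (∑ i : Fin d, b.repr T i.succ ^ 2) * ∑ i : Fin d, b.repr w i.succ ^ 2 :=
      Finset.sum_mul_sq_le_sq_mul_sq _ _ _
    have hS : (∑ i : Fin d, b.repr T i.succ ^ 2)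
        = ∑ i : Fin d, b.repr T i.succ * b.repr T i.succ :=
      Finset.sum_congr rfl fun i _ => sq (b.repr T i.succ)
    have hX : (∑ i : Fin d, b.repr w i.succ ^ 2)
        = ∑ i : Fin d, b.repr w i.succ * b.repr w i.succ :=
      Finset.sum_congr rfl fun i _ => sq (b.repr w i.succ)
    rw [hS, hX, hP, hTT] at CS
    have hXnn : 0 ≤ ∑ i : Fin d, b.repr w i.succ * b.repr w i.succ :=
      Finset.sum_nonneg fun i _ => mul_self_nonneg _
    have hSnn : 0 ≤ ∑ i : Fin d, b.repr T i.succ * b.repr T i.succ :=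
      Finset.sum_nonneg fun i _ => mul_self_nonneg _
    have hs1 : 1 ≤ b.repr T 0 * b.repr T 0 := by rw [hTT] at hSnn; linarith
    constructor
    · rw [hgww]
      nlinarith [CS, hXnn, hs1, sq_nonneg (b.repr w 0)]
    · intro h0
      rw [hgww] at h0
      have hx0sq : b.repr w 0 * b.repr w 0 ≤ 0 := by nlinarith [CS, hs1]
      have hx0 : b.repr w 0 = 0 :=
        mul_self_eq_zero.mp (le_antisymm hx0sq (mul_self_nonneg _))
      have hXz : ∑ i : Fin d, b.repr w i.succ * b.repr w i.succ = 0 := by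
        rw [hx0] at h0; linarith
      have hall : ∀ i : Fin d, b.repr w i.succ = 0 := fun i =>
        mul_self_eq_zero.mp ((Finset.sum_eq_zero_iff_of_nonneg
          (fun j _ => mul_self_nonneg (b.repr w j.succ))).mp hXz i (Finset.mem_univ i))
      have hz : b.repr w = 0 := by
        ext i
        refine Fin.cases ?_ ?_ i
        · exact hx0
        · exact hall
      have := congrArg b.repr.symm hz
      simpa using this
  -- algebraic expansions
  have hgu : ∀ w : V, g u w = g T w + δ * g N w := by
    intro w; rw [hu]; simp [map_add, map_smul]
  have hNu : g N u = δ := by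
    rw [hu]; simp [map_add, map_smul, hNT, hN]
  have hδα : δ * (1 + α^2) ≤ α := by
    have h1 : (0:ℝ) < 1 + α^2 := by positivity
    exact (le_div_iff₀ h1).mp hδ
  have main : ∀ v : V, g T v + α * g N v = 0 →
      B v v ≤ -δ * ((g T v) ^ 2 + (g N v) ^ 2 + H v v) := by
    intro v hv
    rw [hB, hNu, hgu, hH]
    have ht : g T v = -α * g N v := by linarith
    rw [ht]
    nlinarith [mul_nonneg (mul_self_nonneg (g N v)) (sub_nonneg.2 hδα)]
  refine ⟨main, ?_⟩
  intro v hv hv0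
  have h1 := main v hv
  have hlin2 : ∀ x : V, g x (v + g T v • T - g N v • N)
      = g x v + g T v * g x T - g N v * g x N := by
    intro x; simp only [map_add, map_sub, map_smul, smul_eq_mul]
  have hlin1 : ∀ x : V, g (v + g T v • T - g N v • N) x
      = g v x + g T v * g T x - g N v * g N x := by
    intro x
    simp only [map_add, map_sub, map_smul, LinearMap.add_apply, LinearMap.sub_apply,
      LinearMap.smul_apply, smul_eq_mul]
  have hTw : g T (v + g T v • T - g N v • N) = 0 := by
    rw [hlin2 T, hT, hTN]; ring
  have hwH : g (v + g T v • T - g N v • N) (v + g T v • T - g N v • N) = H v v := by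
    rw [hlin1, hlin2 v, hlin2 T, hlin2 N, hg v T, hg v N, hT, hN, hTN, hNT, hH]; ring
  obtain ⟨hge, hdef⟩ := pos _ hTw
  rw [hwH] at hge hdef
  have hq : 0 < (g T v) ^ 2 + (g N v) ^ 2 + H v v := by
    rcases lt_or_eq_of_le (by nlinarith [sq_nonneg (g T v), sq_nonneg (g N v)] :
        (0:ℝ) ≤ (g T v) ^ 2 + (g N v) ^ 2 + H v v) with h | h
    · exact h
    · exfalso
      have hHz : H v v = 0 := by nlinarith [sq_nonneg (g T v), sq_nonneg (g N v)]
      have ht0 : g T v = 0 := by nlinarith [sq_nonneg (g T v), sq_nonneg (g N v)]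
      have hn0 : g N v = 0 := by nlinarith [sq_nonneg (g T v), sq_nonneg (g N v)]
      have hw0 := hdef hHz
      rw [ht0, hn0] at hw0
      simp at hw0
      exact hv0 hw0
  calc B v v ≤ -δ * ((g T v) ^ 2 + (g N v) ^ 2 + H v v) := h1
    _ < 0 := by nlinarith
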